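/- Every RS-game (N₀, v) is balanced; more precisely, the altruistic allocation x^a ∈ ℝ^{N₀} defined by x^a_0 = 0 and x^a_i = v({0, i}) for i ∈ N belongs to Core(N₀, v). -/
import Mathlib


open Finset

/-- An RS-situation with `n` retailers; the supplier is treated separately.
`c` is the unit production cost, `w` the wholesale price function and
`p i` the expected price function of retailer `i`.  All price functions are
decreasing and continuous on `[0, ∞)`, `w` exceeds `c` everywhere,
`p i 0 > w 0` and `p i` reaches the value `c` at some positive quantity. -/
structure RSSituation (n : ℕ) where
  c : ℝ
  w : ℝ → ℝ
  p : Fin n → ℝ → ℝ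
  w_anti : ∀ ⦃q q' : ℝ⦄, 0 ≤ q → q ≤ q' → w q' ≤ w q
  w_cont : ContinuousOn w (Set.Ici 0)
  w_gt_c : ∀ q : ℝ, 0 ≤ q → c < w q
  p_anti : ∀ i : Fin n, ∀ ⦃q q' : ℝ⦄, 0 ≤ q → q ≤ q' → p i q' ≤ p i q
  p_cont : ∀ i : Fin n, ContinuousOn (p i) (Set.Ici 0)
  p_zero_gt : ∀ i : Fin n, w 0 < p i 0
  exists_eq_c : ∀ i : Fin n, ∃ q : ℝ, 0 < q ∧ p i q = c

namespace RSSituation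

variable {n : ℕ}

/-- The feasible set `Q^S ⊆ [0,∞)^S` of order vectors for a coalition `S` of retailers. -/
def QSet (R : RSSituation n) (S : Finset (Fin n)) : Set (S → ℝ) :=
  {q | ∀ i : S, 0 ≤ q i ∧ R.w (∑ j : S, q j) ≤ R.p i.1 (q i)}

/-- The joint profit `∑_{i ∈ S} (p_i(q_i) - w(q_S)) q_i` of a coalition `S` of retailers. -/
def coalProfit (R : RSSituation n) (S : Finset (Fin n)) (q : S → ℝ) : ℝ :=
  ∑ i : S, (R.p i.1 (q i) - R.w (∑ j : S, q j)) * q i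

/-- `q` is an optimal order vector for the coalition `S` of retailers. -/
def IsCoalOpt (R : RSSituation n) (S : Finset (Fin n)) (q : S → ℝ) : Prop :=
  q ∈ R.QSet S ∧ ∀ q' ∈ R.QSet S, R.coalProfit S q' ≤ R.coalProfit S q

/-- The feasible set of order quantities of retailer `i` at unit price `c`. -/
def QcSet (R : RSSituation n) (i : Fin n) : Set ℝ :=
  {q | 0 ≤ q ∧ R.c ≤ R.p i q}

/-- The profit `(p_i(q) - c) q` of retailer `i` at unit price `c`. -/
def indProfit (R : RSSituation n) (i : Fin n) (q : ℝ) : ℝ :=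
  (R.p i q - R.c) * q

/-- `q` is an optimal order quantity for retailer `i` at unit price `c`. -/
def IsIndOpt (R : RSSituation n) (i : Fin n) (q : ℝ) : Prop :=
  q ∈ R.QcSet i ∧ ∀ q' ∈ R.QcSet i, R.indProfit i q' ≤ R.indProfit i q

/-- `v` is the RS-game determined by chosen optimal order vectors `qS S`
(for each retailer coalition `S`) and `qc i` (for each retailer `i`, when
cooperating with the supplier).  Players: `none` is the supplier `0`,
`some i` is retailer `i`. -/
def IsRSGame (R : RSSituation n) (qS : (S : Finset (Fin n)) → (S → ℝ))
    (qc : Fin n → ℝ) (v : Finset (Option (Fin n)) → ℝ) : Prop :=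
  v ∅ = 0 ∧ v {none} = 0 ∧
    (∀ S : Finset (Fin n), S.Nonempty → v (S.image some) = R.coalProfit S (qS S)) ∧
    (∀ S : Finset (Fin n), S.Nonempty →
      v (insert none (S.image some)) = ∑ i ∈ S, R.indProfit i (qc i))

/-- The core of a TU game on the player set `N₀ = Option (Fin n)`. -/
def core (v : Finset (Option (Fin n)) → ℝ) : Set (Option (Fin n) → ℝ) :=
  {x | ∑ i : Option (Fin n), x i = v Finset.univ ∧
    ∀ T : Finset (Option (Fin n)), v T ≤ ∑ i ∈ T, x i}

end RSSituation

/-- Every RS-game is balanced: the altruistic allocation, giving `0` to the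
supplier and `v({0, i})` to each retailer `i`, belongs to the core. -/
theorem rs_game_balanced (n : ℕ) (R : RSSituation n)
    (qS : (S : Finset (Fin n)) → (S → ℝ)) (qc : Fin n → ℝ)
    (hqS : ∀ S : Finset (Fin n), S.Nonempty → R.IsCoalOpt S (qS S))
    (hqc : ∀ i : Fin n, R.IsIndOpt i (qc i))
    (v : Finset (Option (Fin n)) → ℝ) (hv : R.IsRSGame qS qc v) :
    (fun o : Option (Fin n) => o.elim 0 fun i => v {none, some i}) ∈
        RSSituation.core v ∧
      (RSSituation.core v).Nonempty := by
  obtain ⟨hv0, hvn, hvS, hvNS⟩ := hv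
  set x : Option (Fin n) → ℝ :=
    (fun o : Option (Fin n) => o.elim 0 fun i => v {none, some i}) with hxdef
  -- value of x on retailers
  have hxi : ∀ i : Fin n, x (some i) = R.indProfit i (qc i) := by
    intro i
    have h := hvNS {i} (Finset.singleton_nonempty i)
    simp only [Finset.image_singleton, Finset.sum_singleton] at h
    simpa [hxdef] using h
  -- key inequality: coalition profit ≤ sum of individual profits
  have key : ∀ S : Finset (Fin n), S.Nonempty →
      R.coalProfit S (qS S) ≤ ∑ i ∈ S, R.indProfit i (qc i) := by
    intro S hS
    obtain ⟨hmem, -⟩ := hqS S hS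
    have hQ0 : (0:ℝ) ≤ ∑ j : S, qS S j :=
      Finset.sum_nonneg fun j _ => (hmem j).1
    have hcw : R.c < R.w (∑ j : S, qS S j) := R.w_gt_c _ hQ0
    have hstep : R.coalProfit S (qS S) ≤ ∑ i : S, R.indProfit i.1 (qc i.1) := by
      unfold RSSituation.coalProfit
      apply Finset.sum_le_sum
      intro i _
      have h1 := (hmem i).1
      have h2 := (hmem i).2
      have step1 : (R.p i.1 (qS S i) - R.w (∑ j : S, qS S j)) * qS S i
          ≤ (R.p i.1 (qS S i) - R.c) * qS S i :=
        mul_le_mul_of_nonneg_right (by linarith) h1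
      have hfeas : qS S i ∈ R.QcSet i.1 :=
        ⟨h1, le_of_lt (lt_of_lt_of_le hcw h2)⟩
      have step2 : R.indProfit i.1 (qS S i) ≤ R.indProfit i.1 (qc i.1) :=
        (hqc i.1).2 _ hfeas
      exact step1.trans step2
    calc R.coalProfit S (qS S) ≤ ∑ i : S, R.indProfit i.1 (qc i.1) := hstep
      _ = ∑ i ∈ S, R.indProfit i (qc i) :=
        Finset.sum_attach S fun i => R.indProfit i (qc i)
  -- sums of x over images
  have hsum_img : ∀ S : Finset (Fin n),
      ∑ o ∈ S.image some, x o = ∑ i ∈ S, R.indProfit i (qc i) := by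
    intro S
    rw [Finset.sum_image (fun a _ b _ h => Option.some_injective _ h)]
    exact Finset.sum_congr rfl fun i _ => hxi i
  -- efficiency
  have heff : ∑ i : Option (Fin n), x i = v Finset.univ := by
    rcases Nat.eq_zero_or_pos n with hn | hn
    · subst hn
      have huniv : (Finset.univ : Finset (Option (Fin 0))) = {none} := by
        symm
        rw [Finset.eq_univ_iff_forall]
        rintro (_ | i)
        · simp
        · exact i.elim0
      rw [huniv]
      simp [hxdef, hvn]
    · haveI : Nonempty (Fin n) := ⟨⟨0, hn⟩⟩
      have hN : (Finset.univ : Finset (Fin n)).Nonempty := Finset.univ_nonempty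
      have huniv : (Finset.univ : Finset (Option (Fin n)))
          = insert none ((Finset.univ : Finset (Fin n)).image some) := by
        ext o
        rcases o with _ | i <;> simp
      rw [huniv, hvNS _ hN, Finset.sum_insert (by simp),
        hsum_img]
      simp [hxdef]
  refine ⟨⟨heff, ?_⟩, _, ⟨heff, ?_⟩⟩ <;>
  · intro T
    by_cases hnone : none ∈ T
    · have hT : T = insert none ((T.eraseNone).image some) := by
        ext o
        rcases o with _ | i <;> simp [hnone]
      rcases Finset.eq_empty_or_nonempty T.eraseNone with hE | hE
      · rw [hT, hE]
        simp [hvn, hxdef]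
      · rw [hT, hvNS _ hE, Finset.sum_insert (by simp), hsum_img]
        simp [hxdef]
    · have hT : T = (T.eraseNone).image some := by
        ext o
        rcases o with _ | i
        · simp [hnone]
        · simp
      rcases Finset.eq_empty_or_nonempty T.eraseNone with hE | hE
      · rw [hT, hE]
        simp [hv0]
      · rw [hT, hvS _ hE, hsum_img]
        exact key _ hE
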